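/- If a, b ∈ ℂ satisfy ab ≠ 0 and |a| ≠ |b|, then the 3×3 nilpotent matrix T with T₁₂ = a, T₂₃ = b and all other entries zero is not unitarily equivalent to any complex symmetric matrix. -/

import Mathlib

open scoped ComplexConjugate
open Matrix

/-- Paper-convention inner product on ℂⁿ: ⟨x,y⟩ = ∑ xᵢ conj(yᵢ). -/
noncomputable def cinner {n : ℕ} (x y : Fin n → ℂ) : ℂ := ∑ i, x i * conj (y i)

/-- A conjugation on ℂⁿ: a conjugate-linear isometric involution. -/
structure Conjugation (n : ℕ) where
  toFun : (Fin n → ℂ) → (Fin n → ℂ)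
  map_add : ∀ x y, toFun (x + y) = toFun x + toFun y
  map_smul : ∀ (a : ℂ) (x), toFun (a • x) = conj a • toFun x
  isometric : ∀ x y, cinner (toFun x) (toFun y) = cinner y x
  involutive : ∀ x, toFun (toFun x) = x

/-- `T` is unitarily equivalent to a complex symmetric matrix. -/
def UECSM {n : ℕ} (T : Matrix (Fin n) (Fin n) ℂ) : Prop :=
  ∃ Q ∈ Matrix.unitaryGroup (Fin n) ℂ, (Qᴴ * T * Q)ᵀ = Qᴴ * T * Q

theorem nilpotent_not_uecsm (a b : ℂ) (hab : a * b ≠ 0)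
    (habs : ‖a‖ ≠ ‖b‖) :
    ¬ UECSM !![(0 : ℂ), a, 0; 0, 0, b; 0, 0, 0] := by
  rintro ⟨Q, hQ, h⟩
  set c := starRingEnd ℂ with hc
  set T : Matrix (Fin 3) (Fin 3) ℂ := !![(0 : ℂ), a, 0; 0, 0, b; 0, 0, 0] with hT
  have ha : a ≠ 0 := fun h' => hab (by simp [h'])
  have hb : b ≠ 0 := fun h' => hab (by simp [h'])
  have hQ1 : Q * Qᴴ = 1 := Matrix.mem_unitaryGroup_iff.mp hQ
  have hQ2 : Qᴴ * Q = 1 := Matrix.mem_unitaryGroup_iff'.mp hQ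
  set A : Matrix (Fin 3) (Fin 3) ℂ := Tᴴ * T with hA
  set B : Matrix (Fin 3) (Fin 3) ℂ := T * Tᴴ with hB
  have hTH : Tᴴ = !![0,0,0; c a,0,0; 0, c b,0] := by
    ext i j
    fin_cases i <;> fin_cases j <;>
      simp [hT, hc, Matrix.conjTranspose_apply, Matrix.vecHead, Matrix.vecTail]
  have hAd : A = !![0,0,0; 0, c a * a, 0; 0, 0, c b * b] := by
    rw [hA, hTH, hT, Matrix.mul_fin_three]; ring_nf
  have hBd : B = !![c a * a, 0, 0; 0, c b * b, 0; 0, 0, 0] := by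
    rw [hB, hTH, hT, Matrix.mul_fin_three]; ring_nf
  set S : Matrix (Fin 3) (Fin 3) ℂ := Qᴴ * T * Q with hS
  have hmapmap : ∀ M : Matrix (Fin 3) (Fin 3) ℂ, (M.map c).map c = M := by
    intro M; ext i j; simp [Matrix.map_apply]
  have hSH : Sᴴ = S.map c := by
    ext i j
    have := congr_fun (congr_fun h j) i
    simp only [Matrix.transpose_apply] at this
    simp [hc, Matrix.conjTranspose_apply, Matrix.map_apply, this]
  have key1 : (Sᴴ * S).map c = S * Sᴴ := by
    rw [hSH, Matrix.map_mul, hmapmap]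
  have hSHS : Sᴴ * S = Qᴴ * A * Q := by
    rw [hS, hA]
    simp only [Matrix.conjTranspose_mul, Matrix.conjTranspose_conjTranspose, Matrix.mul_assoc]
    rw [← Matrix.mul_assoc Q Qᴴ, hQ1, Matrix.one_mul]
  have hSSH : S * Sᴴ = Qᴴ * B * Q := by
    rw [hS, hB]
    simp only [Matrix.conjTranspose_mul, Matrix.conjTranspose_conjTranspose, Matrix.mul_assoc]
    rw [← Matrix.mul_assoc Q Qᴴ, hQ1, Matrix.one_mul]
  have hAc : A.map c = A := by
    rw [hAd]; ext i j
    fin_cases i <;> fin_cases j <;>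
      simp [Matrix.map_apply, Matrix.vecHead, Matrix.vecTail, mul_comm]
  have hQHc : Qᴴ.map c = Qᵀ := by
    ext i j; simp [Matrix.map_apply, Matrix.conjTranspose_apply]
  have key2 : Qᵀ * (A * Q.map c) = Qᴴ * B * Q := by
    have h2 := key1
    rw [hSHS, hSSH] at h2
    rw [← h2, Matrix.map_mul, Matrix.map_mul, hQHc, hAc, Matrix.mul_assoc]
    simp only [hA, Matrix.mul_assoc]
  set V : Matrix (Fin 3) (Fin 3) ℂ := Q.map c * Qᴴ with hV
  have hV1 : Q.map c * Qᵀ = 1 := by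
    have h3 : (Q * Qᴴ).map c = (1 : Matrix (Fin 3) (Fin 3) ℂ).map c := by rw [hQ1]
    rw [Matrix.map_mul, hQHc] at h3
    simpa using h3
  have key3 : A * V = V * B := by
    have h1 := congrArg (fun M => Q.map c * M * Qᴴ) key2
    simp only [← Matrix.mul_assoc] at h1
    rw [hV1, Matrix.one_mul] at h1
    rw [Matrix.mul_assoc _ Q Qᴴ, hQ1, Matrix.mul_one] at h1
    show A * (Q.map c * Qᴴ) = Q.map c * Qᴴ * B
    rw [← Matrix.mul_assoc]
    exact h1
  have hQcT : (Q.map c)ᵀ = Qᴴ := by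
    ext i j; simp [hc, Matrix.conjTranspose_apply, Matrix.map_apply]
  have hQHT : (Qᴴ)ᵀ = Q.map c := by
    ext i j; simp [hc, Matrix.conjTranspose_apply, Matrix.map_apply]
  have hVsym : Vᵀ = V := by
    show (Q.map c * Qᴴ)ᵀ = Q.map c * Qᴴ
    rw [Matrix.transpose_mul, hQHT, hQcT]
  -- distinctness of the singular values
  have habs' : Complex.normSq a ≠ Complex.normSq b := by
    intro hh
    apply habs
    rw [← Complex.sq_norm, ← Complex.sq_norm] at hh
    nlinarith [norm_nonneg a, norm_nonneg b]
  have hαβ : c a * a ≠ c b * b := by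
    intro hh
    apply habs'
    have h4 : ((Complex.normSq a : ℂ)) = (Complex.normSq b : ℂ) := by
      rw [← Complex.mul_conj, ← Complex.mul_conj, mul_comm a, mul_comm b]
      exact hh
    exact_mod_cast h4
  have hα0 : c a * a ≠ 0 := by
    simpa [hc] using mul_ne_zero (star_ne_zero.mpr ha) ha
  have hβ0 : c b * b ≠ 0 := by
    simpa [hc] using mul_ne_zero (star_ne_zero.mpr hb) hb
  -- entrywise consequences
  rw [hAd, hBd] at key3
  have e00 : V 0 0 = 0 := by
    have h' := congr_fun (congr_fun key3 0) 0
    simpa [Matrix.mul_apply, Fin.sum_univ_three, Matrix.vecHead, Matrix.vecTail, ha, hb]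
      using h'
  have e01 : V 0 1 = 0 := by
    have h' := congr_fun (congr_fun key3 0) 1
    simpa [Matrix.mul_apply, Fin.sum_univ_three, Matrix.vecHead, Matrix.vecTail, ha, hb]
      using h'
  have e20 : V 2 0 = 0 := by
    have h' := congr_fun (congr_fun key3 2) 0
    simp only [Matrix.mul_apply, Fin.sum_univ_three] at h'
    have h'' : (c b * b - c a * a) * V 2 0 = 0 := by
      simp [Matrix.vecHead, Matrix.vecTail] at h'
      ring_nf
      ring_nf at h'
      linear_combination h'
    rcases mul_eq_zero.mp h'' with h3 | h3
    · exact absurd (sub_eq_zero.mp h3) (Ne.symm hαβ)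
    · exact h3
  have e02 : V 0 2 = 0 := by
    have h' := congr_fun (congr_fun hVsym 0) 2
    simp only [Matrix.transpose_apply] at h'
    rw [← h', e20]
  have hVH : Vᴴ = Q * Qᵀ := by
    show (Q.map c * Qᴴ)ᴴ = Q * Qᵀ
    rw [Matrix.conjTranspose_mul, Matrix.conjTranspose_conjTranspose]
    have h5 : (Q.map c)ᴴ = Qᵀ := by
      ext i j; simp [Matrix.conjTranspose_apply, Matrix.map_apply]
    rw [h5]
  have hVV : V * Vᴴ = 1 := by
    rw [hVH]
    show Q.map c * Qᴴ * (Q * Qᵀ) = 1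
    simp only [Matrix.mul_assoc]
    rw [← Matrix.mul_assoc Qᴴ Q Qᵀ, hQ2, Matrix.one_mul]
    exact hV1
  have hfin := congr_fun (congr_fun hVV 0) 0
  simp [Matrix.mul_apply, Fin.sum_univ_three, Matrix.conjTranspose_apply,
    e00, e01, e02, Matrix.one_apply] at hfin
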